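/- Let V be a finite-dimensional real vector space, α an inner product on V, X ∈ V, and φ a smooth positive function on an open interval containing [−√(α(X,X)), √(α(X,X))]. Define F(y) := √(α(y,y))·φ(α(X,y)/√(α(y,y))) for y ≠ 0. Then for every y ∈ V∖{0} and all u,v ∈ V, setting r := α(X,y)/α(y,y)^{1/2}, one has (1/2)·∂²/(∂s∂t)|_{s=t=0} F²(y+su+tv) = φ(r)²·α(u,v) − φ(r)φ'(r)·α(y,u)·α(y,v)·α(X,y)/α(y,y)^{3/2} + φ(r)φ'(r)·(α(y,v)·α(X,u) + α(y,u)·α(X,v) − α(u,v)·α(X,y))/α(y,y)^{1/2} + (φ'(r)² + φ(r)·φ''(r))·(α(X,u) − α(y,u)·α(X,y)/α(y,y))·(α(X,v) − α(y,v)·α(X,y)/α(y,y)). -/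

import Mathlib

noncomputable section

/-- The fundamental tensor `g_y(u,v) = (1/2)·∂²/∂s∂t|_{s=t=0} F(y+su+tv)²`. -/
def gTensor {V : Type*} [NormedAddCommGroup V] [NormedSpace ℝ V]
    (F : V → ℝ) (y u v : V) : ℝ :=
  (1 / 2) * deriv (fun s : ℝ => deriv (fun t : ℝ => (F (y + s • u + t • v)) ^ 2) 0) 0

/-- The Cartan tensor `C_y(u,v,w) = (1/2)·d/dt|_{t=0} g_{y+tw}(u,v)`. -/
def cartanTensor {V : Type*} [NormedAddCommGroup V] [NormedSpace ℝ V]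
    (F : V → ℝ) (y u v w : V) : ℝ :=
  (1 / 2) * deriv (fun t : ℝ => gTensor F (y + t • w) u v) 0

/-- `F` is a Minkowski norm: positive and smooth away from `0`, positively
homogeneous of degree one, with positive-definite symmetric bilinear fundamental tensor. -/
structure IsMinkowskiNorm {V : Type*} [NormedAddCommGroup V] [NormedSpace ℝ V]
    (F : V → ℝ) : Prop where
  pos : ∀ y : V, y ≠ 0 → 0 < F y
  smooth : ContDiffOn ℝ (⊤ : ℕ∞) F {(0 : V)}ᶜ
  homog : ∀ c : ℝ, 0 < c → ∀ y : V, F (c • y) = c * F y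
  g_symm : ∀ y : V, y ≠ 0 → ∀ u v : V, gTensor F y u v = gTensor F y v u
  g_add_left : ∀ y : V, y ≠ 0 → ∀ u u' v : V,
    gTensor F y (u + u') v = gTensor F y u v + gTensor F y u' v
  g_smul_left : ∀ y : V, y ≠ 0 → ∀ (c : ℝ) (u v : V),
    gTensor F y (c • u) v = c * gTensor F y u v
  g_posdef : ∀ y : V, y ≠ 0 → ∀ u : V, u ≠ 0 → 0 < gTensor F y u u

/-- A Lie algebra structure on the real vector space `V`, given as a bilinear map. -/
structure IsLieBracket {V : Type*} [AddCommGroup V] [Module ℝ V]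
    (L : V →ₗ[ℝ] V →ₗ[ℝ] V) : Prop where
  alternate : ∀ x : V, L x x = 0
  jacobi : ∀ x y z : V, L x (L y z) = L (L x y) z + L y (L x z)

/-- The cyclic condition for a Minkowski norm on a Lie algebra. -/
def IsCyclicNorm {V : Type*} [NormedAddCommGroup V] [NormedSpace ℝ V]
    (L : V →ₗ[ℝ] V →ₗ[ℝ] V) (F : V → ℝ) : Prop :=
  ∀ y : V, y ≠ 0 → ∀ x z : V,
    gTensor F y (L x y) z + gTensor F y (L y z) x + gTensor F y (L z x) y = 0

/-- The Riemann curvature `R_y(u) = D_η N(y,u) − N(y,N(y,u)) + N(y,[y,u]) − [y,N(y,u)]`. -/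
def RiemannCurv {V : Type*} [NormedAddCommGroup V] [NormedSpace ℝ V]
    (L : V →ₗ[ℝ] V →ₗ[ℝ] V) (η : V → V) (N : V → V → V) (y u : V) : V :=
  fderiv ℝ (fun z => N z u) y (η y) - N y (N y u) + N y (L y u) - L y (N y u)

/-- Projection onto `m` along `h` in the decomposition `g = h ⊕ m`. -/
def projTo {V : Type*} [AddCommGroup V] [Module ℝ V] (h m : Submodule ℝ V)
    (hcompl : IsCompl h m) : V →ₗ[ℝ] m :=
  m.linearProjOfIsCompl h hcompl.symm

/-- The inner product making the basis `e` orthonormal. -/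
def basisInner {V : Type*} [AddCommGroup V] [Module ℝ V] {ι : Type*} [Fintype ι]
    (e : Module.Basis ι ℝ V) (x y : V) : ℝ :=
  ∑ k, e.repr x k * e.repr y k


section Aux

variable {V : Type*} [NormedAddCommGroup V] [NormedSpace ℝ V]
variable (α : V →ₗ[ℝ] V →ₗ[ℝ] ℝ)

private lemma aux_cs (hαsymm : ∀ u v : V, α u v = α v u)
    (hαnn : ∀ v : V, 0 ≤ α v v) (X w : V) :
    (α X w) ^ 2 ≤ α X X * α w w := by
  have h : ∀ t : ℝ, 0 ≤ α w w * (t * t) + 2 * α X w * t + α X X := by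
    intro t
    have h0 := hαnn (X + t • w)
    simp only [map_add, map_smul, LinearMap.add_apply, LinearMap.smul_apply,
      smul_eq_mul] at h0
    rw [hαsymm w X] at h0
    nlinarith [h0]
  have hd := discrim_le_zero h
  rw [discrim] at hd
  nlinarith [hd]

private lemma aux_rmem (hαsymm : ∀ u v : V, α u v = α v u)
    (hαnn : ∀ v : V, 0 ≤ α v v) (X : V) (lo hi : ℝ)
    (hIcc : Set.Icc (-Real.sqrt (α X X)) (Real.sqrt (α X X)) ⊆ Set.Ioo lo hi)
    (w : V) (hw : 0 < α w w) :
    α X w / Real.sqrt (α w w) ∈ Set.Ioo lo hi := by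
  apply hIcc
  have hcs := aux_cs α hαsymm hαnn X w
  have hq : 0 < Real.sqrt (α w w) := Real.sqrt_pos.mpr hw
  have hq2 : Real.sqrt (α w w) ^ 2 = α w w := Real.sq_sqrt hw.le
  have hs : 0 ≤ Real.sqrt (α X X) := Real.sqrt_nonneg _
  have hs2 : Real.sqrt (α X X) ^ 2 = α X X := Real.sq_sqrt (hαnn X)
  constructor
  · rw [le_div_iff₀ hq]
    nlinarith [sq_nonneg (α X w + Real.sqrt (α X X) * Real.sqrt (α w w)),
      mul_nonneg hs hq.le]
  · rw [div_le_iff₀ hq]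
    nlinarith [sq_nonneg (α X w - Real.sqrt (α X X) * Real.sqrt (α w w)),
      mul_nonneg hs hq.le]

private lemma aux_hdA (hαsymm : ∀ u v : V, α u v = α v u) (w p : V) :
    HasDerivAt (fun t : ℝ => α (w + t • p) (w + t • p)) (2 * α w p) 0 := by
  have hAeq : (fun t : ℝ => α (w + t • p) (w + t • p))
      = fun t => α w w + 2 * α w p * t + α p p * t ^ 2 := by
    funext t
    simp only [map_add, map_smul, LinearMap.add_apply, LinearMap.smul_apply, smul_eq_mul]
    rw [hαsymm p w]; ring
  rw [hAeq]
  have h1 : HasDerivAt (fun t : ℝ => α w w + 2 * α w p * t + α p p * t ^ 2)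
      (0 + 2 * α w p * 1 + α p p * (2 * 0 ^ 1)) 0 :=
    ((hasDerivAt_const _ _).add ((hasDerivAt_id 0).const_mul _)).add
      ((hasDerivAt_pow 2 0).const_mul _)
  simpa using h1

private lemma aux_hdB (X w p : V) :
    HasDerivAt (fun t : ℝ => α X (w + t • p)) (α X p) 0 := by
  have heq : (fun t : ℝ => α X (w + t • p)) = fun t => α X w + α X p * t := by
    funext t
    simp only [map_add, map_smul, smul_eq_mul]
    ring
  rw [heq]
  simpa using ((hasDerivAt_id (0:ℝ)).const_mul (α X p)).const_add (α X w)

private lemma aux_hdsqrtA (hαsymm : ∀ u v : V, α u v = α v u) (w p : V) (hw : 0 < α w w) :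
    HasDerivAt (fun t : ℝ => Real.sqrt (α (w + t • p) (w + t • p)))
      (1 / (2 * Real.sqrt (α w w)) * (2 * α w p)) 0 := by
  have hA := aux_hdA α hαsymm w p
  have h2 : HasDerivAt Real.sqrt (1 / (2 * Real.sqrt (α w w)))
      (α (w + (0:ℝ) • p) (w + (0:ℝ) • p)) := by
    simp only [zero_smul, add_zero]
    exact Real.hasDerivAt_sqrt hw.ne'
  simpa only [Function.comp_def] using h2.comp 0 hA

private lemma aux_hdrho (hαsymm : ∀ u v : V, α u v = α v u) (X w p : V) (hw : 0 < α w w) :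
    HasDerivAt (fun t : ℝ => α X (w + t • p) / Real.sqrt (α (w + t • p) (w + t • p)))
      ((α X p * Real.sqrt (α w w)
          - α X w * (1 / (2 * Real.sqrt (α w w)) * (2 * α w p))) / Real.sqrt (α w w) ^ 2)
      0 := by
  have hq : 0 < Real.sqrt (α w w) := Real.sqrt_pos.mpr hw
  have h := (aux_hdB α X w p).fun_div (aux_hdsqrtA α hαsymm w p hw)
    (by simp only [zero_smul, add_zero]; exact hq.ne')
  simpa only [zero_smul, add_zero] using h

private lemma aux_comp_rho (hαsymm : ∀ u v : V, α u v = α v u) (X w p : V) (hw : 0 < α w w)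
    {ψ : ℝ → ℝ} {d : ℝ} (hψ : HasDerivAt ψ d (α X w / Real.sqrt (α w w))) :
    HasDerivAt (fun t : ℝ => ψ (α X (w + t • p) / Real.sqrt (α (w + t • p) (w + t • p))))
      (d * ((α X p * Real.sqrt (α w w)
          - α X w * (1 / (2 * Real.sqrt (α w w)) * (2 * α w p))) / Real.sqrt (α w w) ^ 2))
      0 := by
  have hψ' : HasDerivAt ψ d
      (α X (w + (0:ℝ) • p) / Real.sqrt (α (w + (0:ℝ) • p) (w + (0:ℝ) • p))) := by
    simp only [zero_smul, add_zero]; exact hψ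
  simpa only [Function.comp_def] using hψ'.comp 0 (aux_hdrho α hαsymm X w p hw)

private lemma aux_inner (hαsymm : ∀ u v : V, α u v = α v u)
    (hαnn : ∀ v : V, 0 ≤ α v v) (X : V) (φ : ℝ → ℝ) (lo hi : ℝ)
    (hIcc : Set.Icc (-Real.sqrt (α X X)) (Real.sqrt (α X X)) ⊆ Set.Ioo lo hi)
    (hφ : ContDiffOn ℝ (⊤ : ℕ∞) φ (Set.Ioo lo hi))
    (F : V → ℝ)
    (hFdef : ∀ y : V, F y = Real.sqrt (α y y) * φ (α X y / Real.sqrt (α y y)))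
    (w : V) (hw : 0 < α w w) (p : V) :
    HasDerivAt (fun t : ℝ => (F (w + t • p)) ^ 2)
      (2 * α w p * φ (α X w / Real.sqrt (α w w)) ^ 2
        + 2 * φ (α X w / Real.sqrt (α w w)) * deriv φ (α X w / Real.sqrt (α w w))
          * (Real.sqrt (α w w) * α X p - α w p * α X w / Real.sqrt (α w w))) 0 := by
  have hrI := aux_rmem α hαsymm hαnn X lo hi hIcc w hw
  have hφat : HasDerivAt φ (deriv φ (α X w / Real.sqrt (α w w)))
      (α X w / Real.sqrt (α w w)) :=
    ((hφ.contDiffAt (isOpen_Ioo.mem_nhds hrI)).differentiableAt (by simp)).hasDerivAt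
  have h1 := (aux_hdA α hαsymm w p).fun_mul ((aux_comp_rho α hαsymm X w p hw hφat).fun_pow 2)
  have hFG : (fun t : ℝ => (F (w + t • p)) ^ 2)
      = fun t : ℝ => α (w + t • p) (w + t • p)
          * φ (α X (w + t • p) / Real.sqrt (α (w + t • p) (w + t • p))) ^ 2 := by
    funext t
    rw [hFdef, mul_pow, Real.sq_sqrt (hαnn _)]
  rw [hFG]
  refine h1.congr_deriv ?_
  simp only [zero_smul, add_zero, pow_one, Nat.cast_ofNat, Nat.reduceSub]
  set q := Real.sqrt (α w w) with hqdef
  have hq : 0 < q := Real.sqrt_pos.mpr hw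
  have hq2 : q ^ 2 = α w w := Real.sq_sqrt hw.le
  rw [← hq2]
  field_simp

end Aux

set_option maxHeartbeats 1600000 in
/-- The fundamental tensor of the `(α,β)`-type norm
`F(y) = √(α(y,y))·φ(α(X,y)/√(α(y,y)))`. -/
theorem fundamental_tensor_of_alpha_beta_norm
    {V : Type*} [NormedAddCommGroup V] [NormedSpace ℝ V] [FiniteDimensional ℝ V]
    (α : V →ₗ[ℝ] V →ₗ[ℝ] ℝ)
    (hαsymm : ∀ u v : V, α u v = α v u)
    (hαpos : ∀ v : V, v ≠ 0 → 0 < α v v)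
    (X : V) (φ : ℝ → ℝ) (lo hi : ℝ)
    (hIcc : Set.Icc (-Real.sqrt (α X X)) (Real.sqrt (α X X)) ⊆ Set.Ioo lo hi)
    (hφ : ContDiffOn ℝ (⊤ : ℕ∞) φ (Set.Ioo lo hi))
    (hφpos : ∀ r ∈ Set.Ioo lo hi, 0 < φ r)
    (F : V → ℝ)
    (hFdef : ∀ y : V, F y = Real.sqrt (α y y) * φ (α X y / Real.sqrt (α y y))) :
    ∀ y : V, y ≠ 0 → ∀ u v : V,
      gTensor F y u v =
        (φ (α X y / Real.sqrt (α y y))) ^ 2 * α u v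
          - φ (α X y / Real.sqrt (α y y)) * deriv φ (α X y / Real.sqrt (α y y))
              * (α y u * α y v * α X y) / Real.sqrt (α y y) ^ 3
          + φ (α X y / Real.sqrt (α y y)) * deriv φ (α X y / Real.sqrt (α y y))
              * (α y v * α X u + α y u * α X v - α u v * α X y) / Real.sqrt (α y y)
          + ((deriv φ (α X y / Real.sqrt (α y y))) ^ 2
                + φ (α X y / Real.sqrt (α y y))
                    * deriv (deriv φ) (α X y / Real.sqrt (α y y)))
              * (α X u - α y u * α X y / α y y)
              * (α X v - α y v * α X y / α y y) := by
  intro y hy u v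
  have hαnn : ∀ w : V, 0 ≤ α w w := by
    intro w
    by_cases hw : w = 0
    · simp [hw]
    · exact (hαpos w hw).le
  have hww : 0 < α y y := hαpos y hy
  have hq : 0 < Real.sqrt (α y y) := Real.sqrt_pos.mpr hww
  have hrI := aux_rmem α hαsymm hαnn X lo hi hIcc y hww
  have hφat : HasDerivAt φ (deriv φ (α X y / Real.sqrt (α y y)))
      (α X y / Real.sqrt (α y y)) :=
    ((hφ.contDiffAt (isOpen_Ioo.mem_nhds hrI)).differentiableAt
      (by simp)).hasDerivAt
  have hφ' : ContDiffOn ℝ (⊤ : ℕ∞) (deriv φ) (Set.Ioo lo hi) :=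
    hφ.deriv_of_isOpen isOpen_Ioo (by exact_mod_cast le_top)
  have hφ'at : HasDerivAt (deriv φ) (deriv (deriv φ) (α X y / Real.sqrt (α y y)))
      (α X y / Real.sqrt (α y y)) :=
    ((hφ'.contDiffAt (isOpen_Ioo.mem_nhds hrI)).differentiableAt
      (by simp)).hasDerivAt
  -- the eventual equality for the inner derivative
  have hev : (fun s : ℝ => deriv (fun t : ℝ => F (y + s • u + t • v) ^ 2) 0)
      =ᶠ[nhds (0:ℝ)] fun s : ℝ =>
        2 * α (y + s • u) v
            * φ (α X (y + s • u) / Real.sqrt (α (y + s • u) (y + s • u))) ^ 2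
          + 2 * φ (α X (y + s • u) / Real.sqrt (α (y + s • u) (y + s • u)))
              * deriv φ (α X (y + s • u) / Real.sqrt (α (y + s • u) (y + s • u)))
              * (Real.sqrt (α (y + s • u) (y + s • u)) * α X v
                  - α (y + s • u) v * α X (y + s • u)
                      / Real.sqrt (α (y + s • u) (y + s • u))) := by
    have hcont : Continuous (fun s : ℝ => y + s • u) := by continuity
    have hmem : {s : ℝ | y + s • u ≠ 0} ∈ nhds (0 : ℝ) := by
      have hop : IsOpen {s : ℝ | y + s • u ≠ 0} :=
        (isOpen_compl_singleton (x := (0 : V))).preimage hcont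
      exact hop.mem_nhds (by simpa using hy)
    filter_upwards [hmem] with s hs
    exact (aux_inner α hαsymm hαnn X φ lo hi hIcc hφ F hFdef (y + s • u)
      (hαpos _ hs) v).deriv
  -- the outer derivative
  have hC : HasDerivAt (fun s : ℝ => α (y + s • u) v) (α u v) 0 := by
    have heq : (fun s : ℝ => α (y + s • u) v) = fun s => α y v + α u v * s := by
      funext s
      simp only [map_add, map_smul, LinearMap.add_apply, LinearMap.smul_apply, smul_eq_mul]
      ring
    rw [heq]
    simpa using ((hasDerivAt_id (0:ℝ)).const_mul (α u v)).const_add (α y v)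
  have hsq := aux_hdsqrtA α hαsymm y u hww
  have hB := aux_hdB α X y u
  have hφρ := aux_comp_rho α hαsymm X y u hww hφat
  have hφ'ρ := aux_comp_rho α hαsymm X y u hww hφ'at
  have hne : Real.sqrt (α (y + (0:ℝ) • u) (y + (0:ℝ) • u)) ≠ 0 := by
    simp only [zero_smul, add_zero]; exact hq.ne'
  have term1 := (hC.const_mul 2).fun_mul (hφρ.fun_pow 2)
  have inner2 := (hsq.mul_const (α X v)).fun_sub ((hC.fun_mul hB).fun_div hsq hne)
  have term2 := ((hφρ.const_mul 2).fun_mul hφ'ρ).fun_mul inner2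
  have hΦ := term1.fun_add term2
  rw [gTensor, hev.deriv_eq, hΦ.deriv]
  simp only [zero_smul, add_zero, pow_one, Nat.cast_ofNat]
  set q := Real.sqrt (α y y) with hqdef
  have hq2 : q ^ 2 = α y y := Real.sq_sqrt hww.le
  rw [← hq2]
  field_simp
  ring


end
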